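/- arXiv:2512.24910 — 2 statements merged into one kernel-verified Lean document; each statement's English description precedes it below -/
import Mathlib

section
/- (Ordering across the conditioning event) Let ν₁,…,νₙ be log-concave probability mass functions on ℕ, 0 < λ ≤ λ′ < λ^max, and R a real number. Then the law of 𝐗ₙ^λ conditioned on {Sₙ^λ < R} is stochastically dominated (coordinatewise order on ℕⁿ) by the law of 𝐗ₙ^{λ′} conditioned on {Sₙ^{λ′} > R}, provided both conditioning events have positive probability. -/
open scoped BigOperators
open scoped Classical

/-- The `l`-tilted measure of a pmf `ν` on `ℕ`. -/
noncomputable def tilt (ν : ℕ → ℝ) (l : ℝ) (x : ℕ) : ℝ :=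
  l ^ x * ν x / (∑' y : ℕ, l ^ y * ν y)

/-- A log-concave probability mass function on `ℕ`. -/
def LogConcavePMF (ν : ℕ → ℝ) : Prop :=
  (∀ x, 0 ≤ ν x) ∧
  (∀ x y : ℕ, x ≤ y → 0 < ν y → 0 < ν x) ∧
  (∀ x : ℕ, ν x * ν (x + 2) ≤ ν (x + 1) ^ 2)

/-- Law of the independent vector with marginals `μ i` conditioned on an event
depending on the sum of the coordinates. -/
noncomputable def condVec {n : ℕ} (μ : Fin n → ℕ → ℝ) (E : ℕ → Prop)
    (x : Fin n → ℕ) : ℝ :=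
  (if E (∑ i, x i) then ∏ i, μ i (x i) else 0) /
    (∑' y : Fin n → ℕ, if E (∑ i, y i) then ∏ i, μ i (y i) else 0)

/-- Stochastic domination in the coordinatewise order on `ℕⁿ`. -/
def StochDom {n : ℕ} (p q : (Fin n → ℕ) → ℝ) : Prop :=
  ∀ f : (Fin n → ℕ) → ℝ, Monotone f → (∃ C, ∀ x, |f x| ≤ C) →
    (∑' x, f x * p x) ≤ ∑' x, f x * q x


open MeasureTheory
open scoped ENNReal


/-- two-term AD lemma in ℝ≥0∞ -/
lemma two_term (u v P Q : ℝ≥0∞) (hu : u ≤ P) (hv : v ≤ P) (huv : u * v ≤ P * Q) :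
    u + v ≤ P + Q := by
  rcases eq_or_ne P 0 with hP | hP
  · simp [hP] at hu hv; simp [hu, hv]
  rcases eq_or_ne P ∞ with hPt | hPt
  · simp [hPt]
  rcases eq_or_ne Q ∞ with hQt | hQt
  · simp [hQt]
  have hu' : u ≠ ∞ := ne_top_of_le_ne_top hPt hu
  have hv' : v ≠ ∞ := ne_top_of_le_ne_top hPt hv
  lift u to NNReal using hu'
  lift v to NNReal using hv'
  lift P to NNReal using hPt
  lift Q to NNReal using hQt
  rw [← ENNReal.coe_add, ← ENNReal.coe_add, ENNReal.coe_le_coe]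
  rw [ENNReal.coe_le_coe] at hu hv
  rw [← ENNReal.coe_mul, ← ENNReal.coe_mul, ENNReal.coe_le_coe] at huv
  have hP0 : (0:ℝ) < P := by
    have : P ≠ 0 := by exact_mod_cast hP
    positivity
  have h1 : (u:ℝ) ≤ P := hu
  have h2 : (v:ℝ) ≤ P := hv
  have h3 : (u:ℝ) * v ≤ P * Q := by exact_mod_cast huv
  have : (u:ℝ) + v ≤ P + Q := by nlinarith [mul_nonneg u.2 v.2]
  exact_mod_cast this

/-- pairing lemma -/
lemma tsum_le_of_pair {α : Type*} (F H : α × α → ℝ≥0∞)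
    (h : ∀ x y, F (x, y) + F (y, x) ≤ H (x, y) + H (y, x)) :
    ∑' p, F p ≤ ∑' p, H p := by
  have key : (∑' p, F p) + (∑' p, F p) ≤ (∑' p, H p) + (∑' p, H p) := by
    have hF : (∑' p, F p) = ∑' p : α × α, F (p.2, p.1) :=
      ((Equiv.prodComm α α).tsum_eq fun p => F p).symm
    have hH : (∑' p, H p) = ∑' p : α × α, H (p.2, p.1) :=
      ((Equiv.prodComm α α).tsum_eq fun p => H p).symm
    calc (∑' p, F p) + (∑' p, F p) = ∑' p : α × α, (F p + F (p.2, p.1)) := by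
          rw [ENNReal.tsum_add, hF]
      _ ≤ ∑' p : α × α, (H p + H (p.2, p.1)) := ENNReal.tsum_le_tsum fun p => h p.1 p.2
      _ = (∑' p, H p) + (∑' p, H p) := by rw [ENNReal.tsum_add, hH]
  by_contra hc
  push_neg at hc
  have : (∑' p, H p) + (∑' p, H p) < (∑' p, F p) + (∑' p, F p) :=
    ENNReal.add_lt_add hc hc
  exact absurd key (not_le.mpr this)

/-- Chain Ahlswede–Daykin (full-space version) on ℕ. -/
lemma chain_AD (a b c d : ℕ → ℝ≥0∞)
    (h : ∀ x y : ℕ, a x * b y ≤ c (max x y) * d (min x y)) :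
    (∑' x, a x) * (∑' y, b y) ≤ (∑' x, c x) * (∑' y, d y) := by
  rw [← ENNReal.tsum_mul_right, ← ENNReal.tsum_mul_right]
  simp_rw [← ENNReal.tsum_mul_left]
  rw [← ENNReal.tsum_prod, ← ENNReal.tsum_prod]
  refine tsum_le_of_pair _ _ fun x y => ?_
  rcases le_total x y with hxy | hxy
  · have h1 : a x * b y ≤ c y * d x := by simpa [max_eq_right hxy, min_eq_left hxy] using h x y
    have h2 : a y * b x ≤ c y * d x := by simpa [max_eq_left hxy, min_eq_right hxy] using h y x
    have h3 : (a x * b y) * (a y * b x) ≤ (c y * d x) * (c x * d y) := by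
      have hx := h x x; have hy := h y y
      simp only [max_self, min_self] at hx hy
      calc (a x * b y) * (a y * b x) = (a x * b x) * (a y * b y) := by ring
        _ ≤ (c x * d x) * (c y * d y) := mul_le_mul' hx hy
        _ = (c y * d x) * (c x * d y) := by ring
    simpa [add_comm] using two_term _ _ _ _ h1 h2 h3
  · have h1 : a x * b y ≤ c x * d y := by simpa [max_eq_left hxy, min_eq_right hxy] using h x y
    have h2 : a y * b x ≤ c x * d y := by simpa [max_eq_right hxy, min_eq_left hxy] using h y x
    have h3 : (a x * b y) * (a y * b x) ≤ (c x * d y) * (c y * d x) := by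
      have hx := h x x; have hy := h y y
      simp only [max_self, min_self] at hx hy
      calc (a x * b y) * (a y * b x) = (a x * b x) * (a y * b y) := by ring
        _ ≤ (c x * d x) * (c y * d y) := mul_le_mul' hx hy
        _ = (c x * d y) * (c y * d x) := by ring
    simpa [add_comm] using two_term _ _ _ _ h1 h2 h3

lemma cons_sup {n : ℕ} (s t : ℕ) (x y : Fin n → ℕ) :
    (Fin.cons s x ⊔ Fin.cons t y : Fin (n+1) → ℕ) = Fin.cons (s ⊔ t) (x ⊔ y) := by
  funext i
  refine Fin.cases ?_ (fun j => ?_) i <;> simp [Pi.sup_apply]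

lemma cons_inf {n : ℕ} (s t : ℕ) (x y : Fin n → ℕ) :
    (Fin.cons s x ⊓ Fin.cons t y : Fin (n+1) → ℕ) = Fin.cons (s ⊓ t) (x ⊓ y) := by
  funext i
  refine Fin.cases ?_ (fun j => ?_) i <;> simp [Pi.inf_apply]

/-- Product Ahlswede–Daykin (full-space) on `Fin n → ℕ`. -/
lemma prod_AD : ∀ (n : ℕ) (α β γ δ : (Fin n → ℕ) → ℝ≥0∞),
    (∀ x y, α x * β y ≤ γ (x ⊔ y) * δ (x ⊓ y)) →
    (∑' x, α x) * (∑' y, β y) ≤ (∑' x, γ x) * (∑' y, δ y) := by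
  intro n
  induction n with
  | zero =>
    intro α β γ δ h
    have e : ∀ (f : (Fin 0 → ℕ) → ℝ≥0∞), (∑' x, f x) = f (fun i => i.elim0) := by
      intro f
      rw [tsum_eq_single (fun i => i.elim0)]
      · intro b hb; exact absurd (funext fun i => i.elim0) hb
    rw [e, e, e, e]
    simpa using h (fun i => i.elim0) (fun i => i.elim0)
  | succ n ih =>
    intro α β γ δ h
    have key : ∀ (f : (Fin (n+1) → ℕ) → ℝ≥0∞),
        (∑' x, f x) = ∑' x : Fin n → ℕ, ∑' t : ℕ, f (Fin.cons t x) := by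
      intro f
      rw [← (Fin.consEquiv (fun _ : Fin (n+1) => ℕ)).tsum_eq f]
      have : ∀ c : ℕ × (Fin n → ℕ), f ((Fin.consEquiv fun _ => ℕ) c) =
          (fun a (b : Fin n → ℕ) => f (Fin.cons a b)) c.1 c.2 := fun c => rfl
      simp_rw [this]
      rw [ENNReal.tsum_prod (f := fun a (b : Fin n → ℕ) => f (Fin.cons a b))]
      rw [ENNReal.tsum_comm]
    rw [key α, key β, key γ, key δ]
    refine ih _ _ _ _ fun x y => ?_
    exact chain_AD (fun t => α (Fin.cons t x)) (fun t => β (Fin.cons t y))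
      (fun t => γ (Fin.cons t (x ⊔ y))) (fun t => δ (Fin.cons t (x ⊓ y)))
      (fun s t => by
        have := h (Fin.cons s x) (Fin.cons t y)
        rwa [cons_sup, cons_inf] at this)

/-- Holley for upper sets. -/
lemma holley_sets {n : ℕ} (p q : (Fin n → ℕ) → ℝ≥0∞)
    (hp1 : (∑' x, p x) = 1) (hq1 : (∑' x, q x) = 1)
    (hol : ∀ x y, p x * q y ≤ q (x ⊔ y) * p (x ⊓ y))
    (A : Set (Fin n → ℕ)) (hA : ∀ ⦃x y⦄, x ∈ A → x ≤ y → y ∈ A) :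
    (∑' x, if x ∈ A then p x else 0) ≤ ∑' x, if x ∈ A then q x else 0 := by
  have := prod_AD n (fun x => if x ∈ A then p x else 0) q
    (fun x => if x ∈ A then q x else 0) p ?_
  · simpa [hp1, hq1] using this
  · intro x y
    by_cases hx : x ∈ A
    · have hxy : x ⊔ y ∈ A := hA hx le_sup_left
      simpa [hx, hxy, mul_comm] using hol x y
    · simp [hx]

/-- Holley for bounded monotone nonnegative real functions (ENNReal form). -/
lemma holley_fun {n : ℕ} (p q : (Fin n → ℕ) → ℝ≥0∞)
    (hp1 : (∑' x, p x) = 1) (hq1 : (∑' x, q x) = 1)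
    (hol : ∀ x y, p x * q y ≤ q (x ⊔ y) * p (x ⊓ y))
    (f : (Fin n → ℕ) → ℝ) (hf : Monotone f) :
    (∑' x, ENNReal.ofReal (f x) * p x) ≤ ∑' x, ENNReal.ofReal (f x) * q x := by
  have key : ∀ r : (Fin n → ℕ) → ℝ≥0∞,
      (∑' x, ENNReal.ofReal (f x) * r x)
        = ∫⁻ t in Set.Ioi (0:ℝ), ∑' x, Set.indicator {t | t < f x} (fun _ => r x) t := by
    intro r
    rw [MeasureTheory.lintegral_tsum]
    · refine tsum_congr fun x => ?_
      have hset : {t : ℝ | t < f x} = Set.Iio (f x) := rfl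
      rw [hset, MeasureTheory.lintegral_indicator_const measurableSet_Iio,
        MeasureTheory.Measure.restrict_apply measurableSet_Iio]
      have : Set.Iio (f x) ∩ Set.Ioi 0 = Set.Ioo 0 (f x) := Set.Iio_inter_Ioi
      rw [this, Real.volume_Ioo, mul_comm]
      simp
    · intro x
      exact (AEMeasurable.indicator aemeasurable_const measurableSet_Iio)
  rw [key p, key q]
  refine MeasureTheory.lintegral_mono fun t => ?_
  have : ∀ r : (Fin n → ℕ) → ℝ≥0∞,
      (∑' x, Set.indicator {s | s < f x} (fun _ => r x) t)
        = ∑' x, if x ∈ {x | t < f x} then r x else 0 := by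
    intro r
    refine tsum_congr fun x => ?_
    by_cases h : t < f x <;> simp [Set.indicator, h]
  rw [this p, this q]
  exact holley_sets p q hp1 hq1 hol _ (fun x y hx hxy => lt_of_lt_of_le hx (hf hxy))

lemma tilt_nonneg (ν : ℕ → ℝ) (l : ℝ) (hl : 0 ≤ l) (hν : ∀ x, 0 ≤ ν x) (x : ℕ) :
    0 ≤ tilt ν l x := by
  unfold tilt
  apply div_nonneg (mul_nonneg (pow_nonneg hl x) (hν x))
  exact tsum_nonneg fun y => mul_nonneg (pow_nonneg hl y) (hν y)

lemma tilt_prod {n : ℕ} (ν : Fin n → ℕ → ℝ) (l : ℝ) (x : Fin n → ℕ) :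
    ∏ i, tilt (ν i) l (x i)
      = l ^ (∑ i, x i) * (∏ i, ν i (x i)) / ∏ i, (∑' y : ℕ, l ^ y * ν i y) := by
  unfold tilt
  rw [Finset.prod_div_distrib, Finset.prod_mul_distrib, Finset.prod_pow_eq_pow_sum]

lemma pow_cross (lam lam' : ℝ) (hl : 0 ≤ lam) (hll : lam ≤ lam') (a b sx sy : ℕ)
    (hab : a + b = sx + sy) (ha : a ≤ sx) :
    lam ^ sx * lam' ^ sy ≤ lam ^ a * lam' ^ b := by
  set k := sx - a with hk
  have hsx : sx = a + k := by omega
  have hb : b = sy + k := by omega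
  rw [hsx, hb, pow_add, pow_add]
  have h1 : lam ^ k ≤ lam' ^ k := pow_le_pow_left₀ hl hll k
  calc lam ^ a * lam ^ k * lam' ^ sy ≤ lam ^ a * lam' ^ k * lam' ^ sy := by
        exact mul_le_mul_of_nonneg_right
          (mul_le_mul_of_nonneg_left h1 (pow_nonneg hl a))
          (pow_nonneg (hl.trans hll) sy)
    _ = lam ^ a * (lam' ^ sy * lam' ^ k) := by ring

lemma sum_inf_add_sum_sup {n : ℕ} (x y : Fin n → ℕ) :
    (∑ i, (x ⊓ y) i) + (∑ i, (x ⊔ y) i) = (∑ i, x i) + (∑ i, y i) := by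
  rw [← Finset.sum_add_distrib, ← Finset.sum_add_distrib]
  refine Finset.sum_congr rfl fun i _ => ?_
  simp only [Pi.inf_apply, Pi.sup_apply]
  exact min_add_max (x i) (y i)

lemma prod_inf_sup {n : ℕ} (ν : Fin n → ℕ → ℝ) (x y : Fin n → ℕ) :
    (∏ i, ν i ((x ⊓ y) i)) * (∏ i, ν i ((x ⊔ y) i))
      = (∏ i, ν i (x i)) * (∏ i, ν i (y i)) := by
  rw [← Finset.prod_mul_distrib, ← Finset.prod_mul_distrib]
  refine Finset.prod_congr rfl fun i _ => ?_
  simp only [Pi.inf_apply, Pi.sup_apply]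
  rcases le_total (x i) (y i) with h | h
  · rw [min_eq_left h, max_eq_right h]
  · rw [min_eq_right h, max_eq_left h]; ring

/-- Ordering across the conditioning event: for log-concave laws `νᵢ` and
`0 < λ ≤ λ′`, the law of `𝐗ₙ^λ` conditioned on `{Sₙ^λ < R}` is stochastically
dominated by the law of `𝐗ₙ^{λ′}` conditioned on `{Sₙ^{λ′} > R}`, provided
both conditioning events have positive probability. -/
theorem order_across_conditioning {n : ℕ} (ν : Fin n → ℕ → ℝ)
    (hlc : ∀ i, LogConcavePMF (ν i)) (hν1 : ∀ i, HasSum (ν i) 1)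
    (lam lam' : ℝ) (hl : 0 < lam) (hll : lam ≤ lam')
    (hZ : ∀ i, Summable (fun x : ℕ => lam ^ x * ν i x))
    (hZ' : ∀ i, Summable (fun x : ℕ => lam' ^ x * ν i x))
    (R : ℝ)
    (hpos : 0 < ∑' y : Fin n → ℕ,
      if ((∑ i, y i : ℕ) : ℝ) < R then ∏ i, tilt (ν i) lam (y i) else 0)
    (hpos' : 0 < ∑' y : Fin n → ℕ,
      if R < ((∑ i, y i : ℕ) : ℝ) then ∏ i, tilt (ν i) lam' (y i) else 0) :
    StochDom (condVec (fun i => tilt (ν i) lam) (fun k => (k : ℝ) < R))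
      (condVec (fun i => tilt (ν i) lam') (fun k => R < (k : ℝ))) := by
  classical
  have hl' : 0 < lam' := lt_of_lt_of_le hl hll
  intro f hf hfb
  obtain ⟨C, hC⟩ := hfb
  have hC0 : 0 ≤ C := le_trans (abs_nonneg _) (hC fun _ => 0)
  have hfC : ∀ x, 0 ≤ f x + C := fun x => by linarith [(abs_le.mp (hC x)).1]
  have hfC2 : ∀ x, f x + C ≤ C + C := fun x => by linarith [(abs_le.mp (hC x)).2]
  set Np : (Fin n → ℕ) → ℝ := fun y =>
    if ((∑ i, y i : ℕ) : ℝ) < R then ∏ i, tilt (ν i) lam (y i) else 0 with hNpdef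
  set Nq : (Fin n → ℕ) → ℝ := fun y =>
    if R < ((∑ i, y i : ℕ) : ℝ) then ∏ i, tilt (ν i) lam' (y i) else 0 with hNqdef
  -- nonnegativity
  have hNp0 : ∀ x, 0 ≤ Np x := by
    intro x
    rw [hNpdef]
    dsimp only
    split
    · exact Finset.prod_nonneg fun i _ => tilt_nonneg _ _ hl.le (hlc i).1 _
    · exact le_refl 0
  have hNq0 : ∀ x, 0 ≤ Nq x := by
    intro x
    rw [hNqdef]
    dsimp only
    split
    · exact Finset.prod_nonneg fun i _ => tilt_nonneg _ _ hl'.le (hlc i).1 _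
    · exact le_refl 0
  -- summability of the numerators
  have hsNp : Summable Np := by
    by_contra hns
    rw [tsum_eq_zero_of_not_summable hns] at hpos
    exact lt_irrefl 0 hpos
  have hsNq : Summable Nq := by
    by_contra hns
    rw [tsum_eq_zero_of_not_summable hns] at hpos'
    exact lt_irrefl 0 hpos'
  set Z : ℝ := ∑' y, Np y with hZdef
  set Z' : ℝ := ∑' y, Nq y with hZ'def
  -- partition functions of the tilts are positive
  have hZl : ∀ i, 0 < ∑' y : ℕ, lam ^ y * ν i y := by
    intro i
    obtain ⟨x₀, hx₀⟩ : ∃ x₀, 0 < ν i x₀ := by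
      by_contra hno
      push_neg at hno
      have : ν i = fun _ => 0 := funext fun x => le_antisymm (hno x) ((hlc i).1 x)
      have h0 : HasSum (ν i) 0 := by rw [this]; exact hasSum_zero
      exact one_ne_zero (h0.unique (hν1 i) ).symm
    calc (0:ℝ) < lam ^ x₀ * ν i x₀ := mul_pos (pow_pos hl x₀) hx₀
      _ ≤ _ := Summable.le_tsum (hZ i) x₀ fun b _ =>
          mul_nonneg (pow_nonneg hl.le b) ((hlc i).1 b)
  have hZl' : ∀ i, 0 < ∑' y : ℕ, lam' ^ y * ν i y := by
    intro i
    obtain ⟨x₀, hx₀⟩ : ∃ x₀, 0 < ν i x₀ := by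
      by_contra hno
      push_neg at hno
      have : ν i = fun _ => 0 := funext fun x => le_antisymm (hno x) ((hlc i).1 x)
      have h0 : HasSum (ν i) 0 := by rw [this]; exact hasSum_zero
      exact one_ne_zero (h0.unique (hν1 i)).symm
    calc (0:ℝ) < lam' ^ x₀ * ν i x₀ := mul_pos (pow_pos hl' x₀) hx₀
      _ ≤ _ := Summable.le_tsum (hZ' i) x₀ fun b _ =>
          mul_nonneg (pow_nonneg hl'.le b) ((hlc i).1 b)
  -- the Holley cross condition for the numerators
  have cross : ∀ x y, Np x * Nq y ≤ Nq (x ⊔ y) * Np (x ⊓ y) := by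
    intro x y
    by_cases hx : ((∑ i, x i : ℕ) : ℝ) < R
    swap
    · rw [hNpdef]
      dsimp only
      rw [if_neg hx, zero_mul]
      exact mul_nonneg (hNq0 _) (hNp0 _)
    by_cases hy : R < ((∑ i, y i : ℕ) : ℝ)
    swap
    · rw [hNqdef]
      dsimp only
      rw [if_neg hy, mul_zero]
      exact mul_nonneg (hNq0 _) (hNp0 _)
    have hsinf : (∑ i, (x ⊓ y) i) ≤ ∑ i, x i :=
      Finset.sum_le_sum fun i _ => inf_le_left
    have hssup : (∑ i, y i) ≤ ∑ i, (x ⊔ y) i :=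
      Finset.sum_le_sum fun i _ => le_sup_right
    have hinf : ((∑ i, (x ⊓ y) i : ℕ) : ℝ) < R :=
      lt_of_le_of_lt (by exact_mod_cast Nat.cast_le.mpr hsinf) hx
    have hsup : R < ((∑ i, (x ⊔ y) i : ℕ) : ℝ) :=
      lt_of_lt_of_le hy (by exact_mod_cast Nat.cast_le.mpr hssup)
    rw [hNpdef, hNqdef]
    dsimp only
    rw [if_pos hx, if_pos hy, if_pos hinf, if_pos hsup]
    rw [tilt_prod, tilt_prod, tilt_prod, tilt_prod]
    rw [div_mul_div_comm, div_mul_div_comm]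
    rw [mul_comm (∏ i, (∑' z : ℕ, lam' ^ z * ν i z)) (∏ i, (∑' z : ℕ, lam ^ z * ν i z))]
    have hD : 0 < (∏ i, (∑' z : ℕ, lam ^ z * ν i z)) * ∏ i, (∑' z : ℕ, lam' ^ z * ν i z) :=
      mul_pos (Finset.prod_pos fun i _ => hZl i) (Finset.prod_pos fun i _ => hZl' i)
    apply div_le_div_of_nonneg_right ?_ hD.le
    have habs : (∏ i, ν i ((x ⊓ y) i)) * (∏ i, ν i ((x ⊔ y) i))
        = (∏ i, ν i (x i)) * (∏ i, ν i (y i)) := prod_inf_sup ν x y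
    have hpow : lam ^ (∑ i, x i) * lam' ^ (∑ i, y i)
        ≤ lam ^ (∑ i, (x ⊓ y) i) * lam' ^ (∑ i, (x ⊔ y) i) :=
      pow_cross lam lam' hl.le hll _ _ _ _ (sum_inf_add_sum_sup x y) hsinf
    have hprodnn : 0 ≤ (∏ i, ν i (x i)) * (∏ i, ν i (y i)) :=
      mul_nonneg (Finset.prod_nonneg fun i _ => (hlc i).1 _)
        (Finset.prod_nonneg fun i _ => (hlc i).1 _)
    calc lam ^ (∑ i, x i) * (∏ i, ν i (x i)) * (lam' ^ (∑ i, y i) * ∏ i, ν i (y i))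
        = (lam ^ (∑ i, x i) * lam' ^ (∑ i, y i)) * ((∏ i, ν i (x i)) * ∏ i, ν i (y i)) := by
          ring
      _ ≤ (lam ^ (∑ i, (x ⊓ y) i) * lam' ^ (∑ i, (x ⊔ y) i))
            * ((∏ i, ν i (x i)) * ∏ i, ν i (y i)) :=
          mul_le_mul_of_nonneg_right hpow hprodnn
      _ = (lam ^ (∑ i, (x ⊓ y) i) * lam' ^ (∑ i, (x ⊔ y) i))
            * ((∏ i, ν i ((x ⊓ y) i)) * ∏ i, ν i ((x ⊔ y) i)) := by rw [habs]
      _ = lam' ^ (∑ i, (x ⊔ y) i) * (∏ i, ν i ((x ⊔ y) i))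
            * (lam ^ (∑ i, (x ⊓ y) i) * ∏ i, ν i ((x ⊓ y) i)) := by ring
  -- normalized real measures
  have hZpos : 0 < Z := hpos
  have hZ'pos : 0 < Z' := hpos'
  have hp0 : ∀ x, 0 ≤ Np x / Z := fun x => div_nonneg (hNp0 x) hZpos.le
  have hq0 : ∀ x, 0 ≤ Nq x / Z' := fun x => div_nonneg (hNq0 x) hZ'pos.le
  have hsp : Summable (fun x => Np x / Z) := hsNp.div_const Z
  have hsq : Summable (fun x => Nq x / Z') := hsNq.div_const Z'
  have hp1 : (∑' x, Np x / Z) = 1 := by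
    rw [tsum_div_const, ← hZdef, div_self hZpos.ne']
  have hq1 : (∑' x, Nq x / Z') = 1 := by
    rw [tsum_div_const, ← hZ'def, div_self hZ'pos.ne']
  -- ENNReal versions
  set P : (Fin n → ℕ) → ℝ≥0∞ := fun x => ENNReal.ofReal (Np x / Z) with hPdef
  set Q : (Fin n → ℕ) → ℝ≥0∞ := fun x => ENNReal.ofReal (Nq x / Z') with hQdef
  have hP1 : (∑' x, P x) = 1 := by
    rw [hPdef]
    rw [← ENNReal.ofReal_tsum_of_nonneg hp0 hsp, hp1, ENNReal.ofReal_one]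
  have hQ1 : (∑' x, Q x) = 1 := by
    rw [hQdef]
    rw [← ENNReal.ofReal_tsum_of_nonneg hq0 hsq, hq1, ENNReal.ofReal_one]
  have holPQ : ∀ x y, P x * Q y ≤ Q (x ⊔ y) * P (x ⊓ y) := by
    intro x y
    rw [hPdef, hQdef]
    dsimp only
    rw [← ENNReal.ofReal_mul (hp0 x), ← ENNReal.ofReal_mul (hq0 _)]
    apply ENNReal.ofReal_le_ofReal
    rw [div_mul_div_comm, div_mul_div_comm, mul_comm Z' Z]
    exact div_le_div_of_nonneg_right (cross x y) (mul_pos hZpos hZ'pos).le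
  -- apply Holley for the shifted function
  have hg : Monotone fun x => f x + C := hf.add_const C
  have key := holley_fun P Q hP1 hQ1 holPQ (fun x => f x + C) hg
  -- convert back to real sums
  have hsgp : Summable (fun x => (f x + C) * (Np x / Z)) := by
    refine Summable.of_nonneg_of_le
      (fun x => mul_nonneg (hfC x) (hp0 x))
      (fun x => mul_le_mul_of_nonneg_right (hfC2 x) (hp0 x))
      (hsp.mul_left (C + C))
  have hsgq : Summable (fun x => (f x + C) * (Nq x / Z')) := by
    refine Summable.of_nonneg_of_le
      (fun x => mul_nonneg (hfC x) (hq0 x))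
      (fun x => mul_le_mul_of_nonneg_right (hfC2 x) (hq0 x))
      (hsq.mul_left (C + C))
  have hkey' : (∑' x, (f x + C) * (Np x / Z)) ≤ ∑' x, (f x + C) * (Nq x / Z') := by
    have e1 : (∑' x, ENNReal.ofReal (f x + C) * P x)
        = ENNReal.ofReal (∑' x, (f x + C) * (Np x / Z)) := by
      rw [ENNReal.ofReal_tsum_of_nonneg (fun x => mul_nonneg (hfC x) (hp0 x)) hsgp]
      refine tsum_congr fun x => ?_
      rw [hPdef, ENNReal.ofReal_mul (hfC x)]
    have e2 : (∑' x, ENNReal.ofReal (f x + C) * Q x)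
        = ENNReal.ofReal (∑' x, (f x + C) * (Nq x / Z')) := by
      rw [ENNReal.ofReal_tsum_of_nonneg (fun x => mul_nonneg (hfC x) (hq0 x)) hsgq]
      refine tsum_congr fun x => ?_
      rw [hQdef, ENNReal.ofReal_mul (hfC x)]
    rw [e1, e2] at key
    exact (ENNReal.ofReal_le_ofReal_iff
      (tsum_nonneg fun x => mul_nonneg (hfC x) (hq0 x))).mp key
  -- summability of f * p
  have hsfp : Summable (fun x => f x * (Np x / Z)) := by
    refine Summable.of_norm (Summable.of_nonneg_of_le (fun x => norm_nonneg _)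
      (fun x => ?_) (hsp.mul_left C))
    rw [norm_mul, Real.norm_eq_abs, Real.norm_eq_abs, abs_of_nonneg (hp0 x)]
    exact mul_le_mul_of_nonneg_right (hC x) (hp0 x)
  have hsfq : Summable (fun x => f x * (Nq x / Z')) := by
    refine Summable.of_norm (Summable.of_nonneg_of_le (fun x => norm_nonneg _)
      (fun x => ?_) (hsq.mul_left C))
    rw [norm_mul, Real.norm_eq_abs, Real.norm_eq_abs, abs_of_nonneg (hq0 x)]
    exact mul_le_mul_of_nonneg_right (hC x) (hq0 x)
  -- expand the shifted sums
  have hgp : (∑' x, (f x + C) * (Np x / Z)) = (∑' x, f x * (Np x / Z)) + C := by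
    have : ∀ x, (f x + C) * (Np x / Z) = f x * (Np x / Z) + C * (Np x / Z) :=
      fun x => by ring
    simp_rw [this]
    rw [Summable.tsum_add hsfp (hsp.mul_left C), tsum_mul_left, hp1, mul_one]
  have hgq : (∑' x, (f x + C) * (Nq x / Z')) = (∑' x, f x * (Nq x / Z')) + C := by
    have : ∀ x, (f x + C) * (Nq x / Z') = f x * (Nq x / Z') + C * (Nq x / Z') :=
      fun x => by ring
    simp_rw [this]
    rw [Summable.tsum_add hsfq (hsq.mul_left C), tsum_mul_left, hq1, mul_one]
  rw [hgp, hgq] at hkey'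
  -- identify the goal with the normalized sums
  have hpeq : ∀ x, condVec (fun i => tilt (ν i) lam) (fun k => (k : ℝ) < R) x
      = Np x / Z := fun x => rfl
  have hqeq : ∀ x, condVec (fun i => tilt (ν i) lam') (fun k => R < (k : ℝ)) x
      = Nq x / Z' := fun x => rfl
  simp_rw [hpeq, hqeq]
  linarith
end

section
/- (Canonical measure sandwiched between tail conditionings) Let ν₁,…,νₙ be log-concave probability mass functions on ℕ, X₁,…,Xₙ independent with these laws, and R a real with P(Sₙ ≤ R) > 0, P(Sₙ = ⌊R⌋) > 0, P(Sₙ > R) > 0. Then in the coordinatewise stochastic order, P(𝐗ₙ ∈ · | Sₙ ≤ R) ≼ P(𝐗ₙ ∈ · | Sₙ = ⌊R⌋) ≼ P(𝐗ₙ ∈ · | Sₙ > R). -/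
open scoped BigOperators
open scoped Classical

open Finset

/-- cross log-concavity -/
lemma lc_cross (b : ℕ → ℝ) (hb0 : ∀ m, 0 ≤ b m)
    (hdown : ∀ x y : ℕ, x ≤ y → 0 < b y → 0 < b x)
    (hlc : ∀ x : ℕ, b x * b (x + 2) ≤ b (x + 1) ^ 2) :
    ∀ m m' : ℕ, m ≤ m' → b m * b (m' + 1) ≤ b (m + 1) * b m' := by
  intro m m' hmm'
  induction m' with
  | zero =>
    interval_cases m
    exact le_of_eq (mul_comm _ _)
  | succ M ih =>
    rcases Nat.lt_or_ge m (M+1) with hm | hm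
    · have hm' : m ≤ M := Nat.lt_succ_iff.mp hm
      rcases eq_or_lt_of_le (hb0 (M+2)) with hz | hz
      · calc b m * b (M + 1 + 1) = 0 := by rw [← hz]; ring
          _ ≤ b (m+1) * b (M+1) := mul_nonneg (hb0 _) (hb0 _)
      · have hM1 : 0 < b (M+1) := hdown _ _ (by omega) hz
        have h1 : b m * b (M+1) ≤ b (m+1) * b M := ih hm'
        have h2 : b M * b (M+2) ≤ b (M+1)^2 := hlc M
        have key : (b m * b (M+2)) * b (M+1) ≤ (b (m+1) * b (M+1)) * b (M+1) := by
          nlinarith [hb0 m, hb0 (m+1), hb0 M, hb0 (M+1), hb0 (M+2)]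
        exact le_of_mul_le_mul_right key hM1
    · have : m = M + 1 := by omega
      subst this
      exact le_of_eq (mul_comm _ _)

/-- generic CDF-domination from cross condition -/
lemma cdf_dom (A B : ℕ → ℝ) (hA : ∀ i, 0 ≤ A i) (hB : ∀ i, 0 ≤ B i)
    (hcross : ∀ i i', i ≤ i' → B i * A i' ≤ A i * B i')
    (N j : ℕ) (hj : j + 1 ≤ N) :
    (∑ i ∈ range (j+1), B i) * (∑ i ∈ range N, A i) ≤
      (∑ i ∈ range (j+1), A i) * (∑ i ∈ range N, B i) := by
  have hsplitA : ∑ i ∈ range N, A i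
      = ∑ i ∈ range (j+1), A i + ∑ i ∈ Ico (j+1) N, A i :=
    (Finset.sum_range_add_sum_Ico _ hj).symm
  have hsplitB : ∑ i ∈ range N, B i
      = ∑ i ∈ range (j+1), B i + ∑ i ∈ Ico (j+1) N, B i :=
    (Finset.sum_range_add_sum_Ico _ hj).symm
  rw [hsplitA, hsplitB, mul_add, mul_add]
  have key : (∑ i ∈ range (j+1), B i) * (∑ i ∈ Ico (j+1) N, A i) ≤
      (∑ i ∈ range (j+1), A i) * (∑ i ∈ Ico (j+1) N, B i) := by
    rw [Finset.sum_mul_sum, Finset.sum_mul_sum]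
    apply Finset.sum_le_sum
    intro i hi
    apply Finset.sum_le_sum
    intro i' hi'
    exact hcross i i' (by
      simp only [Finset.mem_range] at hi
      simp only [Finset.mem_Ico] at hi'
      omega)
  linarith [le_of_eq (mul_comm (∑ i ∈ range (j+1), B i) (∑ i ∈ range (j+1), A i))]

/-- generic shifted CDF-domination from shifted cross condition -/
lemma cdf_dom2 (A B : ℕ → ℝ) (hA : ∀ i, 0 ≤ A i) (hB : ∀ i, 0 ≤ B i)
    (hcross : ∀ i i', i ≤ i' → A i * B (i'+1) ≤ B (i+1) * A i')
    (N j : ℕ) (hj : j + 1 ≤ N) :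
    (∑ i ∈ range j, A i) * (∑ i ∈ range N, B i) ≤
      (∑ i ∈ range (j+1), B i) * (∑ i ∈ range N, A i) := by
  have hsplitB : ∑ i ∈ range N, B i
      = ∑ i ∈ range (j+1), B i + ∑ i ∈ Ico (j+1) N, B i :=
    (Finset.sum_range_add_sum_Ico _ hj).symm
  have hsplitA : ∑ i ∈ range N, A i
      = ∑ i ∈ range j, A i + ∑ i ∈ Ico j N, A i :=
    (Finset.sum_range_add_sum_Ico _ (by omega)).symm
  rw [hsplitA, hsplitB, mul_add, mul_add]
  have key : (∑ i ∈ range j, A i) * (∑ i ∈ Ico (j+1) N, B i) ≤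
      (∑ i ∈ range (j+1), B i) * (∑ i ∈ Ico j N, A i) := by
    have e1 : ∑ i ∈ Ico (j+1) N, B i = ∑ t ∈ range (N-1-j), B ((j+t)+1) := by
      rw [Finset.sum_Ico_eq_sum_range]
      apply Finset.sum_congr (by congr 1; omega)
      intro t _; congr 1; omega
    have e2 : ∑ t ∈ range (N-1-j), A (j+t) ≤ ∑ i ∈ Ico j N, A i := by
      rw [Finset.sum_Ico_eq_sum_range]
      apply Finset.sum_le_sum_of_subset_of_nonneg
      · apply Finset.range_subset_range.mpr; omega
      · intro i _ _; exact hA _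
    have e3 : ∑ i ∈ range j, B (i+1) ≤ ∑ i ∈ range (j+1), B i := by
      rw [Finset.sum_range_succ']
      have := hB 0
      linarith
    calc (∑ i ∈ range j, A i) * (∑ i ∈ Ico (j+1) N, B i)
        = ∑ i ∈ range j, ∑ t ∈ range (N-1-j), A i * B ((j+t)+1) := by
          rw [e1, Finset.sum_mul_sum]
      _ ≤ ∑ i ∈ range j, ∑ t ∈ range (N-1-j), B (i+1) * A (j+t) := by
          apply Finset.sum_le_sum; intro i hi
          apply Finset.sum_le_sum; intro t _
          exact hcross i (j+t) (by simp only [Finset.mem_range] at hi; omega)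
      _ = (∑ i ∈ range j, B (i+1)) * (∑ t ∈ range (N-1-j), A (j+t)) := by
          rw [Finset.sum_mul_sum]
      _ ≤ (∑ i ∈ range (j+1), B i) * (∑ i ∈ Ico j N, A i) := by
          apply mul_le_mul e3 e2
          · exact Finset.sum_nonneg fun i _ => hA _
          · exact Finset.sum_nonneg fun i _ => hB _
  linarith [le_of_eq (mul_comm (∑ i ∈ range j, A i) (∑ i ∈ range (j+1), B i))]

lemma efron_core (a b : ℕ → ℝ)
    (ha0 : ∀ j, 0 ≤ a j) (hb0 : ∀ m, 0 ≤ b m)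
    (hadown : ∀ x y : ℕ, x ≤ y → 0 < a y → 0 < a x)
    (hbdown : ∀ x y : ℕ, x ≤ y → 0 < b y → 0 < b x)
    (haLC : ∀ x : ℕ, a x * a (x + 2) ≤ a (x + 1) ^ 2)
    (hbLC : ∀ x : ℕ, b x * b (x + 2) ≤ b (x + 1) ^ 2)
    (g : ℕ → ℕ → ℝ)
    (hg1 : ∀ j m, b m ≠ 0 → g j m ≤ g (j+1) m)
    (hg2 : ∀ j m, b m ≠ 0 → g j m ≤ g j (m+1))
    (k : ℕ)
    (hck : 0 < ∑ j ∈ range (k+1), a j * b (k-j))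
    (hck1 : 0 < ∑ j ∈ range (k+2), a j * b (k+1-j)) :
    (∑ j ∈ range (k+1), a j * b (k-j) * g j (k-j)) * (∑ j ∈ range (k+2), a j * b (k+1-j))
      ≤ (∑ j ∈ range (k+2), a j * b (k+1-j) * g j (k+1-j)) * (∑ j ∈ range (k+1), a j * b (k-j)) := by
  set ck : ℝ := ∑ j ∈ range (k+1), a j * b (k-j) with hckdef
  set ck1 : ℝ := ∑ j ∈ range (k+2), a j * b (k+1-j) with hck1def
  set A : ℕ → ℝ := fun j => if j ≤ k then a j * b (k-j) else 0 with hAdef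
  set B : ℕ → ℝ := fun j => if j ≤ k+1 then a j * b (k+1-j) else 0 with hBdef
  have hA0 : ∀ j, 0 ≤ A j := by
    intro j; simp only [hAdef]; split
    · exact mul_nonneg (ha0 _) (hb0 _)
    · exact le_rfl
  have hB0 : ∀ j, 0 ≤ B j := by
    intro j; simp only [hBdef]; split
    · exact mul_nonneg (ha0 _) (hb0 _)
    · exact le_rfl
  have sumA : ∑ i ∈ range (k+2), A i = ck := by
    rw [Finset.sum_range_succ]
    have h1 : A (k+1) = 0 := by simp [hAdef]
    rw [h1, add_zero, hckdef]
    apply Finset.sum_congr rfl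
    intro j hj
    simp only [Finset.mem_range] at hj
    simp [hAdef, Nat.lt_succ_iff.mp hj]
  have sumB : ∑ i ∈ range (k+2), B i = ck1 := by
    rw [hck1def]
    apply Finset.sum_congr rfl
    intro j hj
    simp only [Finset.mem_range] at hj
    simp [hBdef, Nat.lt_succ_iff.mp hj]
  have bcross := lc_cross b hb0 hbdown hbLC
  have across := lc_cross a ha0 hadown haLC
  have cross1 : ∀ i i', i ≤ i' → B i * A i' ≤ A i * B i' := by
    intro i i' hii'
    rcases Nat.lt_or_ge k i' with h | h
    · have : A i' = 0 := by simp [hAdef]; omega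
      rw [this, mul_zero]
      exact mul_nonneg (hA0 _) (hB0 _)
    · have hik : i ≤ k := le_trans hii' h
      have eA : A i = a i * b (k-i) := by simp [hAdef, hik]
      have eA' : A i' = a i' * b (k-i') := by simp [hAdef, h]
      have eB : B i = a i * b ((k-i)+1) := by
        simp only [hBdef]; rw [if_pos (by omega)]; congr 2; omega
      have eB' : B i' = a i' * b ((k-i')+1) := by
        simp only [hBdef]; rw [if_pos (by omega)]; congr 2; omega
      rw [eA, eA', eB, eB']
      have := bcross (k-i') (k-i) (by omega)
      nlinarith [ha0 i, ha0 i', mul_nonneg (ha0 i) (ha0 i')]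
  have cross2 : ∀ i i', i ≤ i' → A i * B (i'+1) ≤ B (i+1) * A i' := by
    intro i i' hii'
    rcases Nat.lt_or_ge k i' with h | h
    · have h1 : B (i'+1) = 0 := by simp [hBdef]; omega
      rw [h1, mul_zero]
      exact mul_nonneg (hB0 _) (hA0 _)
    · have hik : i ≤ k := le_trans hii' h
      have eA : A i = a i * b (k-i) := by simp [hAdef, hik]
      have eA' : A i' = a i' * b (k-i') := by simp [hAdef, h]
      have eB : B (i+1) = a (i+1) * b (k-i) := by
        simp only [hBdef]; rw [if_pos (by omega)]; congr 2; omega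
      have eB' : B (i'+1) = a (i'+1) * b (k-i') := by
        simp only [hBdef]; rw [if_pos (by omega)]; congr 2; omega
      rw [eA, eA', eB, eB']
      have := across i i' hii'
      nlinarith [hb0 (k-i), hb0 (k-i'), mul_nonneg (hb0 (k-i)) (hb0 (k-i'))]
  set p : ℕ → ℝ := fun j => A j / ck with hpdef
  set q : ℕ → ℝ := fun j => B j / ck1 with hqdef
  set Pc : ℕ → ℝ := fun j => ∑ i ∈ range (j+1), p i with hPcdef
  set Qc : ℕ → ℝ := fun j => ∑ i ∈ range (j+1), q i with hQcdef
  set lam : ℕ → ℝ := fun j => Qc j - Pc j + p j with hlamdef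
  set psi : ℕ → ℝ := fun j => g j (k+1-j) with hpsidef
  set phi : ℕ → ℝ := fun j => g j (k-j) with hphidef
  have hp0 : ∀ j, 0 ≤ p j := fun j => div_nonneg (hA0 j) (le_of_lt hck)
  have hlam0 : ∀ j, j ≤ k+1 → 0 ≤ lam j := by
    intro j hj
    have h := cdf_dom2 A B hA0 hB0 cross2 (k+2) j (by omega)
    rw [sumA, sumB] at h
    have h2 : (∑ i ∈ range j, A i) / ck ≤ (∑ i ∈ range (j+1), B i) / ck1 :=
      (div_le_div_iff₀ hck hck1).mpr h
    have e1 : Pc j - p j = (∑ i ∈ range j, A i) / ck := by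
      simp only [hPcdef, hpdef, Finset.sum_range_succ]
      rw [← Finset.sum_div]
      ring
    have e2 : Qc j = (∑ i ∈ range (j+1), B i) / ck1 := by
      simp only [hQcdef, hqdef]; rw [← Finset.sum_div]
    simp only [hlamdef]
    linarith [e1, e2, h2]
  have hlamp : ∀ j, j ≤ k+1 → lam j ≤ p j := by
    intro j hj
    have h := cdf_dom A B hA0 hB0 cross1 (k+2) j (by omega)
    rw [sumA, sumB] at h
    have h2 : (∑ i ∈ range (j+1), B i) / ck1 ≤ (∑ i ∈ range (j+1), A i) / ck :=
      (div_le_div_iff₀ hck1 hck).mpr (by linarith)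
    have e1 : Pc j = (∑ i ∈ range (j+1), A i) / ck := by
      simp only [hPcdef, hpdef]; rw [← Finset.sum_div]
    have e2 : Qc j = (∑ i ∈ range (j+1), B i) / ck1 := by
      simp only [hQcdef, hqdef]; rw [← Finset.sum_div]
    simp only [hlamdef]
    nlinarith [e1, e2, h2]
  have hq_eq0 : q 0 = lam 0 := by
    simp only [hlamdef, hQcdef, hPcdef]
    simp [Finset.sum_range_one]
  have hq_eqS : ∀ j : ℕ, q (j+1) = lam (j+1) + (p j - lam j) := by
    intro j
    simp only [hlamdef]
    have eQ : Qc (j+1) = Qc j + q (j+1) := by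
      simp only [hQcdef]; rw [Finset.sum_range_succ]
    have eP : Pc (j+1) = Pc j + p (j+1) := by
      simp only [hPcdef]; rw [Finset.sum_range_succ]
    rw [eQ, eP]; ring
  have hptop : p (k+1) = 0 := by
    simp only [hpdef]
    have : A (k+1) = 0 := by simp [hAdef]
    rw [this, zero_div]
  have hlamtop : lam (k+1) = 0 := by
    simp only [hlamdef]
    have eQ : Qc (k+1) = 1 := by
      simp only [hQcdef, hqdef]; rw [← Finset.sum_div, sumB, div_self (ne_of_gt hck1)]
    have eP : Pc (k+1) = 1 := by
      simp only [hPcdef, hpdef]; rw [← Finset.sum_div, sumA, div_self (ne_of_gt hck)]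
    rw [eQ, eP, hptop]; ring
  -- support facts
  have hpsupp : ∀ j, p j ≠ 0 → j ≤ k ∧ b (k-j) ≠ 0 := by
    intro j hj
    by_contra hcon
    apply hj
    simp only [hpdef]
    rcases Nat.lt_or_ge k j with h | h
    · have : A j = 0 := by simp [hAdef]; omega
      rw [this, zero_div]
    · push_neg at hcon
      have : A j = 0 := by
        simp only [hAdef, if_pos h]
        rw [hcon h, mul_zero]
      rw [this, zero_div]
  -- main computation
  have main : ∑ j ∈ range (k+1), p j * phi j ≤ ∑ j ∈ range (k+2), q j * psi j := by
    have step1 : ∑ j ∈ range (k+2), q j * psi j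
        = ∑ j ∈ range (k+2), lam j * psi j
          + ∑ j ∈ range (k+1), (p j - lam j) * psi (j+1) := by
      rw [Finset.sum_range_succ' (fun j => q j * psi j) (k+1),
        Finset.sum_range_succ' (fun j => lam j * psi j) (k+1)]
      have e : ∀ j : ℕ, q (j+1) * psi (j+1)
          = lam (j+1) * psi (j+1) + (p j - lam j) * psi (j+1) := by
        intro j; rw [hq_eqS j]; ring
      rw [Finset.sum_congr rfl (fun j _ => e j), Finset.sum_add_distrib, hq_eq0]
      ring
    have bound1 : ∑ j ∈ range (k+2), lam j * phi j ≤ ∑ j ∈ range (k+2), lam j * psi j := by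
      apply Finset.sum_le_sum
      intro j hj
      simp only [Finset.mem_range] at hj
      rcases eq_or_lt_of_le (hlam0 j (by omega)) with h0 | h0
      · rw [← h0]; simp
      · have hpj : p j ≠ 0 := by
          intro hz
          have := hlamp j (by omega)
          rw [hz] at this
          linarith
        obtain ⟨hjk, hbne⟩ := hpsupp j hpj
        have := hg2 j (k-j) hbne
        have e : k - j + 1 = k + 1 - j := by omega
        rw [e] at this
        exact mul_le_mul_of_nonneg_left this (le_of_lt h0)
    have bound2 : ∑ j ∈ range (k+1), (p j - lam j) * phi j
        ≤ ∑ j ∈ range (k+1), (p j - lam j) * psi (j+1) := by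
      apply Finset.sum_le_sum
      intro j hj
      simp only [Finset.mem_range] at hj
      have hnn : 0 ≤ p j - lam j := by linarith [hlamp j (by omega)]
      rcases eq_or_lt_of_le hnn with h0 | h0
      · rw [← h0]; simp
      · have hpj : p j ≠ 0 := by
          intro hz
          have := hlam0 j (by omega)
          rw [hz] at h0
          linarith
        obtain ⟨hjk, hbne⟩ := hpsupp j hpj
        have := hg1 j (k-j) hbne
        have e : k + 1 - (j+1) = k - j := by omega
        simp only [hpsidef, hphidef]
        rw [e]
        exact mul_le_mul_of_nonneg_left this hnn
    have alg : ∑ j ∈ range (k+2), lam j * phi j + ∑ j ∈ range (k+1), (p j - lam j) * phi j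
        = ∑ j ∈ range (k+1), p j * phi j := by
      rw [Finset.sum_range_succ, hlamtop, zero_mul, add_zero, ← Finset.sum_add_distrib]
      apply Finset.sum_congr rfl
      intro j _; ring
    linarith [bound1, bound2, step1, alg]
  -- translate back
  have eS0 : ∑ j ∈ range (k+1), p j * phi j
      = (∑ j ∈ range (k+1), a j * b (k-j) * g j (k-j)) / ck := by
    rw [Finset.sum_div]
    apply Finset.sum_congr rfl
    intro j hj
    simp only [Finset.mem_range] at hj
    simp only [hpdef, hphidef, hAdef]
    rw [if_pos (by omega : j ≤ k)]
    ring
  have eS1 : ∑ j ∈ range (k+2), q j * psi j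
      = (∑ j ∈ range (k+2), a j * b (k+1-j) * g j (k+1-j)) / ck1 := by
    rw [Finset.sum_div]
    apply Finset.sum_congr rfl
    intro j hj
    simp only [Finset.mem_range] at hj
    simp only [hqdef, hpsidef, hBdef]
    rw [if_pos (by omega : j ≤ k+1)]
    ring
  rw [eS0, eS1] at main
  exact (div_le_div_iff₀ hck hck1).mp main

section Conv

variable (a b : ℕ → ℝ)

/-- convolution -/
noncomputable def convSeq (k : ℕ) : ℝ := ∑ j ∈ range (k+1), a j * b (k-j)

lemma convSeq_nonneg (ha0 : ∀ j, 0 ≤ a j) (hb0 : ∀ m, 0 ≤ b m) (k : ℕ) :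
    0 ≤ convSeq a b k :=
  Finset.sum_nonneg fun j _ => mul_nonneg (ha0 _) (hb0 _)

lemma convSeq_down (ha0 : ∀ j, 0 ≤ a j) (hb0 : ∀ m, 0 ≤ b m)
    (hadown : ∀ x y : ℕ, x ≤ y → 0 < a y → 0 < a x)
    (hbdown : ∀ x y : ℕ, x ≤ y → 0 < b y → 0 < b x) :
    ∀ x y : ℕ, x ≤ y → 0 < convSeq a b y → 0 < convSeq a b x := by
  intro K' K hKK' hpos
  obtain ⟨j, hj, hjpos⟩ := Finset.exists_lt_of_sum_lt (f := fun _ => (0:ℝ))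
    (by simpa [convSeq] using hpos)
  simp only [Finset.mem_range] at hj
  have haj : 0 < a j := by
    rcases lt_or_ge 0 (a j) with h | h
    · exact h
    · nlinarith [hb0 (K - j)]
  have hbj : 0 < b (K - j) := by
    rcases lt_or_ge 0 (b (K-j)) with h | h
    · exact h
    · nlinarith [ha0 j]
  set j' := min j K' with hj'def
  have haj' : 0 < a j' := hadown _ _ (min_le_left _ _) haj
  have hbj' : 0 < b (K' - j') := by
    apply hbdown _ _ _ hbj
    omega
  apply Finset.sum_pos'
  · intro i _; exact mul_nonneg (ha0 _) (hb0 _)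
  · exact ⟨j', Finset.mem_range.mpr (by omega), mul_pos haj' hbj'⟩

lemma convSeq_aux (ha0 : ∀ j, 0 ≤ a j) (hb0 : ∀ m, 0 ≤ b m)
    (hadown : ∀ x y : ℕ, x ≤ y → 0 < a y → 0 < a x)
    (haLC : ∀ x : ℕ, a x * a (x + 2) ≤ a (x + 1) ^ 2) (k : ℕ) :
    a (k+2) * convSeq a b k ≤ a (k+1) * convSeq a b (k+1) := by
  have across := lc_cross a ha0 hadown haLC
  have h1 : convSeq a b (k+1) = a 0 * b (k+1) + ∑ j ∈ range (k+1), a (j+1) * b (k-j) := by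
    rw [convSeq, Finset.sum_range_succ' (fun j => a j * b (k+1-j)) (k+1)]
    have e : ∀ j ∈ range (k+1), a (j+1) * b (k+1-(j+1)) = a (j+1) * b (k-j) := by
      intro j hj
      congr 2
      omega
    rw [Finset.sum_congr rfl e]
    norm_num [add_comm]
  have h2 : a (k+2) * convSeq a b k ≤ a (k+1) * ∑ j ∈ range (k+1), a (j+1) * b (k-j) := by
    rw [convSeq, Finset.mul_sum, Finset.mul_sum]
    apply Finset.sum_le_sum
    intro j hj
    simp only [Finset.mem_range] at hj
    have := across j (k+1) (by omega)
    nlinarith [hb0 (k-j)]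
  have h3 : 0 ≤ a (k+1) * (a 0 * b (k+1)) :=
    mul_nonneg (ha0 _) (mul_nonneg (ha0 _) (hb0 _))
  calc a (k+2) * convSeq a b k ≤ a (k+1) * ∑ j ∈ range (k+1), a (j+1) * b (k-j) := h2
    _ ≤ a (k+1) * convSeq a b (k+1) := by rw [h1]; nlinarith
lemma convSeq_LC (ha0 : ∀ j, 0 ≤ a j) (hb0 : ∀ m, 0 ≤ b m)
    (hadown : ∀ x y : ℕ, x ≤ y → 0 < a y → 0 < a x)
    (hbdown : ∀ x y : ℕ, x ≤ y → 0 < b y → 0 < b x)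
    (haLC : ∀ x : ℕ, a x * a (x + 2) ≤ a (x + 1) ^ 2)
    (hbLC : ∀ x : ℕ, b x * b (x + 2) ≤ b (x + 1) ^ 2) :
    ∀ k : ℕ, convSeq a b k * convSeq a b (k + 2) ≤ convSeq a b (k + 1) ^ 2 := by
  intro k
  rcases le_or_gt (convSeq a b (k+2)) 0 with h | h
  · have h2 : convSeq a b (k+2) = 0 :=
      le_antisymm h (convSeq_nonneg a b ha0 hb0 _)
    rw [h2, mul_zero]
    positivity
  · have hk1 : 0 < convSeq a b (k+1) := convSeq_down a b ha0 hb0 hadown hbdown _ _ (by omega) h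
    have hk : 0 < convSeq a b k := convSeq_down a b ha0 hb0 hadown hbdown _ _ (by omega) h
    -- instantiate efron_core with g j m = - b (m+1) / b m (0 if b m = 0)
    set g : ℕ → ℕ → ℝ := fun _ m => if b m = 0 then 0 else -(b (m+1) / b m) with hgdef
    have hbg : ∀ m, b m * g 0 m = -(b (m+1)) := by
      intro m
      simp only [hgdef]
      split
      · rename_i hbm
        rcases lt_or_ge 0 (b (m+1)) with hpos | hneg
        · have := hbdown m (m+1) (by omega) hpos
          rw [hbm] at this
          linarith
        · have : b (m+1) = 0 := le_antisymm hneg (hb0 _)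
          rw [this, hbm]; ring
      · rename_i hbm
        field_simp
    have hg1 : ∀ j m, b m ≠ 0 → g j m ≤ g (j+1) m := by
      intro j m _; exact le_rfl
    have hg2 : ∀ j m, b m ≠ 0 → g j m ≤ g j (m+1) := by
      intro j m hbm
      simp only [hgdef]
      rw [if_neg hbm]
      split
      · rename_i hbm1
        rw [hbm1]
        simp
      · rename_i hbm1
        have hbmpos : 0 < b m := lt_of_le_of_ne (hb0 m) (Ne.symm hbm)
        have hbm1pos : 0 < b (m+1) := lt_of_le_of_ne (hb0 (m+1)) (Ne.symm hbm1)
        rw [neg_le_neg_iff, div_le_div_iff₀ hbm1pos hbmpos]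
        have := hbLC m
        nlinarith
    have core := efron_core a b ha0 hb0 hadown hbdown haLC hbLC g hg1 hg2 k
      (by rw [← convSeq]; exact hk)
      (by
        have : ∑ j ∈ range (k+2), a j * b (k+1-j) = convSeq a b (k+1) := rfl
        rw [this]; exact hk1)
    -- compute the V sums
    have eV : ∀ K : ℕ, ∑ j ∈ range (K+1), a j * b (K-j) * g j (K-j)
        = -(convSeq a b (K+1) - a (K+1) * b 0) := by
      intro K
      have e1 : ∀ j ∈ range (K+1), a j * b (K-j) * g j (K-j) = -(a j * b ((K-j)+1)) := by
        intro j hj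
        have h2 : b (K-j) * g j (K-j) = -(b ((K-j)+1)) := by
          have := hbg (K-j)
          simpa [hgdef] using this
        calc a j * b (K-j) * g j (K-j) = a j * (b (K-j) * g j (K-j)) := by ring
          _ = a j * (-(b ((K-j)+1))) := by rw [h2]
          _ = -(a j * b ((K-j)+1)) := by ring
      rw [Finset.sum_congr rfl e1, Finset.sum_neg_distrib]
      congr 1
      have h3 : convSeq a b (K+1) = ∑ j ∈ range (K+1), a j * b ((K-j)+1) + a (K+1) * b 0 := by
        rw [convSeq, Finset.sum_range_succ]
        congr 1
        · apply Finset.sum_congr rfl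
          intro j hj
          simp only [Finset.mem_range] at hj
          congr 2
          omega
        · simp
      rw [h3]; ring
    have eVk := eV k
    have eVk1 : ∑ j ∈ range (k+2), a j * b (k+1-j) * g j (k+1-j)
        = -(convSeq a b (k+2) - a (k+2) * b 0) := eV (k+1)
    rw [eVk, eVk1] at core
    have ec1 : ∑ j ∈ range (k+2), a j * b (k+1-j) = convSeq a b (k+1) := rfl
    have ec0 : ∑ j ∈ range (k+1), a j * b (k-j) = convSeq a b k := rfl
    rw [ec1, ec0] at core
    have aux := convSeq_aux a b ha0 hb0 hadown haLC k
    have haux2 : b 0 * (a (k+2) * convSeq a b k) ≤ b 0 * (a (k+1) * convSeq a b (k+1)) :=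
      mul_le_mul_of_nonneg_left aux (hb0 0)
    nlinarith [core, haux2]

end Conv

lemma efron_seq (a b : ℕ → ℝ)
    (ha0 : ∀ j, 0 ≤ a j) (hb0 : ∀ m, 0 ≤ b m)
    (hadown : ∀ x y : ℕ, x ≤ y → 0 < a y → 0 < a x)
    (hbdown : ∀ x y : ℕ, x ≤ y → 0 < b y → 0 < b x)
    (haLC : ∀ x : ℕ, a x * a (x + 2) ≤ a (x + 1) ^ 2)
    (hbLC : ∀ x : ℕ, b x * b (x + 2) ≤ b (x + 1) ^ 2)
    (u : ℕ → ℕ → ℝ) (C : ℝ)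
    (hbound : ∀ j m, |u j m| ≤ C * b m)
    (humono : ∀ j m, u j m ≤ u (j+1) m)
    (hucross : ∀ j m, u j m * b (m+1) ≤ u j (m+1) * b m) :
    ∀ k l, k ≤ l →
      (∑ j ∈ range (k+1), a j * u j (k-j)) * convSeq a b l
        ≤ (∑ j ∈ range (l+1), a j * u j (l-j)) * convSeq a b k := by
  have hu0 : ∀ j m, b m = 0 → u j m = 0 := by
    intro j m hbm
    have := hbound j m
    rw [hbm, mul_zero] at this
    exact abs_eq_zero.mp (le_antisymm this (abs_nonneg _))
  set g : ℕ → ℕ → ℝ := fun j m => if b m = 0 then C else u j m / b m with hgdef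
  have hg1 : ∀ j m, b m ≠ 0 → g j m ≤ g (j+1) m := by
    intro j m hbm
    have hbpos : 0 < b m := lt_of_le_of_ne (hb0 m) (Ne.symm hbm)
    simp only [hgdef, if_neg hbm]
    rw [div_le_div_iff₀ hbpos hbpos]
    nlinarith [humono j m]
  have hg2 : ∀ j m, b m ≠ 0 → g j m ≤ g j (m+1) := by
    intro j m hbm
    have hbpos : 0 < b m := lt_of_le_of_ne (hb0 m) (Ne.symm hbm)
    simp only [hgdef, if_neg hbm]
    split
    · -- b (m+1) = 0 : bound by C
      have hb : u j m ≤ C * b m := (abs_le.mp (hbound j m)).2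
      rw [div_le_iff₀ hbpos]
      linarith
    · rename_i hbm1
      have hbpos1 : 0 < b (m+1) := lt_of_le_of_ne (hb0 (m+1)) (Ne.symm hbm1)
      rw [div_le_div_iff₀ hbpos hbpos1]
      have := hucross j m
      linarith
  have hUV : ∀ K : ℕ, ∑ j ∈ range (K+1), a j * u j (K-j)
      = ∑ j ∈ range (K+1), a j * b (K-j) * g j (K-j) := by
    intro K
    apply Finset.sum_congr rfl
    intro j _
    by_cases hbm : b (K-j) = 0
    · rw [hbm, hu0 j (K-j) hbm]
      ring
    · simp only [hgdef, if_neg hbm]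
      field_simp
  -- adjacent case
  have adj : ∀ k : ℕ, 0 < convSeq a b k → 0 < convSeq a b (k+1) →
      (∑ j ∈ range (k+1), a j * u j (k-j)) * convSeq a b (k+1)
        ≤ (∑ j ∈ range (k+2), a j * u j (k+1-j)) * convSeq a b k := by
    intro k hck hck1
    rw [hUV k, hUV (k+1)]
    exact efron_core a b ha0 hb0 hadown hbdown haLC hbLC g hg1 hg2 k hck hck1
  -- zero case
  have hUzero : ∀ K : ℕ, convSeq a b K = 0 → ∑ j ∈ range (K+1), a j * u j (K-j) = 0 := by
    intro K hK
    apply Finset.sum_eq_zero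
    intro j hj
    have hterm : a j * b (K-j) = 0 := by
      have := (Finset.sum_eq_zero_iff_of_nonneg
        (fun i _ => mul_nonneg (ha0 i) (hb0 _))).mp hK j hj
      exact this
    rcases mul_eq_zero.mp hterm with h | h
    · rw [h, zero_mul]
    · rw [hu0 j (K-j) h, mul_zero]
  -- chain
  intro k l hkl
  induction l with
  | zero =>
    have : k = 0 := by omega
    subst this
    exact le_of_eq rfl
  | succ L ih =>
    rcases Nat.lt_or_ge k (L+1) with hkL | hkL
    · have hkL' : k ≤ L := by omega
      rcases eq_or_lt_of_le (convSeq_nonneg a b ha0 hb0 (L+1)) with hz | hz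
      · rw [hUzero (L+1) hz.symm, ← hz]
        simp
      · have hL : 0 < convSeq a b L := convSeq_down a b ha0 hb0 hadown hbdown _ _ (by omega) hz
        have hk : 0 < convSeq a b k := convSeq_down a b ha0 hb0 hadown hbdown _ _ (by omega) hz
        have h1 := ih hkL'
        have h2 := adj L hL hz
        -- combine: U k * c(L+1) ≤ U(L+1) * c k
        have h3 : (∑ j ∈ range (k+1), a j * u j (k-j)) * convSeq a b L * convSeq a b (L+1)
            ≤ (∑ j ∈ range (L+2), a j * u j (L+1-j)) * convSeq a b k * convSeq a b L := by
          calc (∑ j ∈ range (k+1), a j * u j (k-j)) * convSeq a b L * convSeq a b (L+1)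
              = ((∑ j ∈ range (k+1), a j * u j (k-j)) * convSeq a b L) * convSeq a b (L+1) := by ring
            _ ≤ ((∑ j ∈ range (L+1), a j * u j (L-j)) * convSeq a b k) * convSeq a b (L+1) :=
                mul_le_mul_of_nonneg_right h1 (le_of_lt hz)
            _ = ((∑ j ∈ range (L+1), a j * u j (L-j)) * convSeq a b (L+1)) * convSeq a b k := by ring
            _ ≤ ((∑ j ∈ range (L+2), a j * u j (L+1-j)) * convSeq a b L) * convSeq a b k :=
                mul_le_mul_of_nonneg_right h2 (le_of_lt hk)
            _ = (∑ j ∈ range (L+2), a j * u j (L+1-j)) * convSeq a b k * convSeq a b L := by ring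
        have h4 := le_of_mul_le_mul_left
          (by
            calc convSeq a b L * ((∑ j ∈ range (k+1), a j * u j (k-j)) * convSeq a b (L+1))
                = (∑ j ∈ range (k+1), a j * u j (k-j)) * convSeq a b L * convSeq a b (L+1) := by ring
              _ ≤ (∑ j ∈ range (L+2), a j * u j (L+1-j)) * convSeq a b k * convSeq a b L := h3
              _ = convSeq a b L * ((∑ j ∈ range (L+2), a j * u j (L+1-j)) * convSeq a b k) := by ring)
          hL
        exact h4
    · have : k = L + 1 := by omega
      subst this
      exact le_of_eq rfl

/-- reindexing sum over antidiagonal tuples -/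
lemma sum_adt_succ {n : ℕ} (F : (Fin (n+1) → ℕ) → ℝ) (k : ℕ) :
    ∑ x ∈ Finset.Nat.antidiagonalTuple (n+1) k, F x
      = ∑ j ∈ range (k+1), ∑ y ∈ Finset.Nat.antidiagonalTuple n (k-j), F (Fin.cons j y) := by
  conv_rhs => rw [Finset.sum_sigma']
  apply Finset.sum_nbij' (fun x => (⟨x 0, Fin.tail x⟩ :
      Σ _j : ℕ, (Fin n → ℕ))) (fun p => Fin.cons p.1 p.2)
  · intro x hx
    rw [Finset.Nat.mem_antidiagonalTuple] at hx
    have hsum : x 0 + ∑ i : Fin n, Fin.tail x i = k := by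
      rw [← hx, Fin.sum_univ_succ]
      rfl
    simp only [Finset.mem_sigma, Finset.mem_range, Finset.Nat.mem_antidiagonalTuple]
    constructor
    · omega
    · show ∑ i : Fin n, Fin.tail x i = k - x 0
      omega
  · intro p hp
    rw [Finset.mem_sigma] at hp
    obtain ⟨hp1, hp2⟩ := hp
    rw [Finset.mem_range] at hp1
    rw [Finset.Nat.mem_antidiagonalTuple] at hp2
    rw [Finset.Nat.mem_antidiagonalTuple, Fin.sum_cons, hp2]
    omega
  · intro x _
    exact Fin.cons_self_tail x
  · intro p _
    ext
    · simp
    · simp [Fin.tail_cons]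
  · intro x _
    rw [Fin.cons_self_tail]

noncomputable def Gfin (n : ℕ) (ν : Fin n → ℕ → ℝ) (f : (Fin n → ℕ) → ℝ) (k : ℕ) : ℝ :=
  ∑ x ∈ Finset.Nat.antidiagonalTuple n k, f x * ∏ i, ν i (x i)

noncomputable def Wfin (n : ℕ) (ν : Fin n → ℕ → ℝ) (k : ℕ) : ℝ :=
  Gfin n ν (fun _ => 1) k

/-- master induction -/
theorem efron_master : ∀ (n : ℕ) (ν : Fin n → ℕ → ℝ),
    (∀ i, (∀ x, 0 ≤ ν i x) ∧ (∀ x y : ℕ, x ≤ y → 0 < ν i y → 0 < ν i x) ∧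
      (∀ x : ℕ, ν i x * ν i (x + 2) ≤ ν i (x + 1) ^ 2)) →
    (∀ k, 0 ≤ Wfin n ν k) ∧
    (∀ k l : ℕ, k ≤ l → 0 < Wfin n ν l → 0 < Wfin n ν k) ∧
    (∀ k, Wfin n ν k * Wfin n ν (k+2) ≤ Wfin n ν (k+1)^2) ∧
    (∀ (f : (Fin n → ℕ) → ℝ) (C : ℝ) (k : ℕ), (∀ x, |f x| ≤ C) →
      |Gfin n ν f k| ≤ C * Wfin n ν k) ∧
    (∀ (f : (Fin n → ℕ) → ℝ) (C : ℝ), (∀ x, |f x| ≤ C) → Monotone f →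
      ∀ k l : ℕ, k ≤ l → Gfin n ν f k * Wfin n ν l ≤ Gfin n ν f l * Wfin n ν k) := by
  intro n
  induction n with
  | zero =>
    intro ν hν
    have hW : ∀ k, Wfin 0 ν k = if k = 0 then 1 else 0 := by
      intro k
      cases k with
      | zero => simp [Wfin, Gfin]
      | succ k' => simp [Wfin, Gfin]
    have hG : ∀ f k, Gfin 0 ν f k = if k = 0 then f ![] else 0 := by
      intro f k
      cases k with
      | zero => simp [Gfin]
      | succ k' => simp [Gfin]
    refine ⟨?_, ?_, ?_, ?_, ?_⟩
    · intro k; rw [hW]; split <;> norm_num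
    · intro k l hkl hl
      rw [hW] at *
      split at hl
      · rename_i h; subst h
        have : k = 0 := by omega
        subst this; simpa using hl
      · simp at hl
    · intro k; rw [hW, hW, hW]
      rcases Nat.eq_zero_or_pos k with h | h
      · subst h; norm_num
      · rw [if_neg (by omega), if_neg (by omega), if_neg (by omega)]; norm_num
    · intro f C k hf
      rw [hG, hW]
      split
      · simpa using hf ![]
      · simp
    · intro f C hf hmono k l hkl
      rw [hG, hG, hW, hW]
      by_cases hl : l = 0
      · subst hl
        have hk0 : k = 0 := by omega
        subst hk0
        simp
      · simp [hl]
  | succ n IH =>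
    intro ν hν
    set a : ℕ → ℝ := ν 0 with hadef
    set ν' : Fin n → ℕ → ℝ := fun i => ν i.succ with hν'def
    have hν' : ∀ i, (∀ x, 0 ≤ ν' i x) ∧ (∀ x y : ℕ, x ≤ y → 0 < ν' i y → 0 < ν' i x) ∧
        (∀ x : ℕ, ν' i x * ν' i (x + 2) ≤ ν' i (x + 1) ^ 2) := fun i => hν i.succ
    obtain ⟨ihW0, ihWdown, ihWLC, ihGbd, ihE⟩ := IH ν' hν'
    set b : ℕ → ℝ := Wfin n ν' with hbdef
    have ha0 := (hν 0).1
    have hadown : ∀ x y : ℕ, x ≤ y → 0 < a y → 0 < a x := (hν 0).2.1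
    have haLC := (hν 0).2.2
    -- decompositions
    have hGdec : ∀ (f : (Fin (n+1) → ℕ) → ℝ) (k : ℕ),
        Gfin (n+1) ν f k = ∑ j ∈ range (k+1),
          a j * Gfin n ν' (fun y => f (Fin.cons j y)) (k-j) := by
      intro f k
      rw [Gfin, sum_adt_succ]
      apply Finset.sum_congr rfl
      intro j _
      rw [Gfin, Finset.mul_sum]
      apply Finset.sum_congr rfl
      intro y _
      rw [Fin.prod_univ_succ]
      simp only [Fin.cons_zero, Fin.cons_succ]
      ring
    have hWdec : ∀ k : ℕ, Wfin (n+1) ν k = convSeq a b k := by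
      intro k
      rw [Wfin, hGdec, convSeq]
      rfl
    -- done with structure; fill the five parts
    have hb0 : ∀ m, 0 ≤ b m := ihW0
    have hbdown : ∀ x y : ℕ, x ≤ y → 0 < b y → 0 < b x := fun x y h hy => ihWdown x y h hy
    have hbLC : ∀ x : ℕ, b x * b (x+2) ≤ b (x+1)^2 := ihWLC
    refine ⟨?_, ?_, ?_, ?_, ?_⟩
    · intro k; rw [hWdec]; exact convSeq_nonneg a b ha0 hb0 k
    · intro k l hkl hl
      rw [hWdec] at *
      exact convSeq_down a b ha0 hb0 hadown hbdown k l hkl hl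
    · intro k; rw [hWdec, hWdec, hWdec]
      exact convSeq_LC a b ha0 hb0 hadown hbdown haLC hbLC k
    · intro f C k hf
      rw [hGdec, hWdec, convSeq]
      have hterm : ∀ j ∈ range (k+1),
          |a j * Gfin n ν' (fun y => f (Fin.cons j y)) (k-j)| ≤ C * (a j * b (k-j)) := by
        intro j _
        rw [abs_mul, abs_of_nonneg (ha0 j)]
        have := ihGbd (fun y => f (Fin.cons j y)) C (k-j) (fun y => hf _)
        calc a j * |Gfin n ν' (fun y => f (Fin.cons j y)) (k-j)| ≤ a j * (C * b (k-j)) :=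
            mul_le_mul_of_nonneg_left this (ha0 j)
          _ = C * (a j * b (k-j)) := by ring
      calc |∑ j ∈ range (k+1), a j * Gfin n ν' (fun y => f (Fin.cons j y)) (k-j)|
          ≤ ∑ j ∈ range (k+1), |a j * Gfin n ν' (fun y => f (Fin.cons j y)) (k-j)| :=
            Finset.abs_sum_le_sum_abs _ _
        _ ≤ ∑ j ∈ range (k+1), C * (a j * b (k-j)) := Finset.sum_le_sum hterm
        _ = C * ∑ j ∈ range (k+1), a j * b (k-j) := by rw [Finset.mul_sum]
    · intro f C hf hmono k l hkl
      set u : ℕ → ℕ → ℝ := fun j m => Gfin n ν' (fun y => f (Fin.cons j y)) m with hudef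
      have hbound : ∀ j m, |u j m| ≤ C * b m := by
        intro j m
        exact ihGbd _ C m (fun y => hf _)
      have humono : ∀ j m, u j m ≤ u (j+1) m := by
        intro j m
        simp only [hudef, Gfin]
        apply Finset.sum_le_sum
        intro y _
        apply mul_le_mul_of_nonneg_right
        · apply hmono
          intro i
          refine Fin.cases ?_ ?_ i
          · simp [Fin.cons_zero]
          · intro i'; simp [Fin.cons_succ]
        · exact Finset.prod_nonneg fun i _ => (hν' i).1 _
      have hucross : ∀ j m, u j m * b (m+1) ≤ u j (m+1) * b m := by
        intro j m
        apply ihE (fun y => f (Fin.cons j y)) C (fun y => hf _) ?_ m (m+1) (by omega)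
        intro y y' hyy'
        apply hmono
        intro i
        refine Fin.cases ?_ ?_ i
        · simp [Fin.cons_zero]
        · intro i'; simp only [Fin.cons_succ]; exact hyy' i'
      have := efron_seq a b ha0 hb0 hadown hbdown haLC hbLC u C hbound humono hucross k l hkl
      rw [hGdec, hGdec, hWdec, hWdec]
      exact this

/-- total sum of product measure -/
lemma hasSum_prod_pi : ∀ (n : ℕ) (ν : Fin n → ℕ → ℝ), (∀ i x, 0 ≤ ν i x) →
    (∀ i, HasSum (ν i) 1) → HasSum (fun x : Fin n → ℕ => ∏ i, ν i (x i)) 1 := by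
  intro n
  induction n with
  | zero =>
    intro ν _ _
    haveI : Unique (Fin 0 → ℕ) := ⟨⟨fun i => Fin.elim0 i⟩, fun x => funext fun i => Fin.elim0 i⟩
    have := hasSum_single (f := fun x : Fin 0 → ℕ => ∏ i, ν i (x i)) default
      (fun b' hb' => absurd (Subsingleton.elim b' default) hb')
    simpa using this
  | succ n IH =>
    intro ν hν0 hν1
    have IH' := IH (fun i => ν i.succ) (fun i x => hν0 i.succ x) (fun i => hν1 i.succ)
    have h0 : HasSum (ν 0) 1 := hν1 0
    set gg : (Fin n → ℕ) → ℝ := fun x => ∏ i, ν i.succ (x i) with hggdef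
    have IH2 : HasSum gg 1 := IH'
    have hgg0 : ∀ y, 0 ≤ gg y := fun y => Finset.prod_nonneg fun i _ => hν0 i.succ _
    have hs : Summable (fun x : ℕ × (Fin n → ℕ) => ν 0 x.1 * gg x.2) :=
      h0.summable.mul_of_nonneg IH2.summable (fun x => hν0 0 x) hgg0
    have hprod := h0.mul IH2 hs
    rw [one_mul] at hprod
    refine (Equiv.hasSum_iff (Fin.consEquiv (fun _ : Fin (n+1) => ℕ))).mp ?_
    have e2 : ((fun x : Fin (n+1) → ℕ => ∏ i, ν i (x i)) ∘ (Fin.consEquiv (fun _ : Fin (n+1) => ℕ)))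
        = fun p : ℕ × (Fin n → ℕ) => ν 0 p.1 * gg p.2 := by
      funext p
      simp only [Function.comp_apply, Fin.consEquiv_apply]
      rw [Fin.prod_univ_succ]
      simp [hggdef]
    rw [e2]
    exact hprod

/-- fiber decomposition of a summable function -/
lemma fiber_hasSum {n : ℕ} (h : (Fin n → ℕ) → ℝ) (hs : Summable h) :
    HasSum (fun k => ∑ x ∈ Finset.Nat.antidiagonalTuple n k, h x) (∑' x, h x) := by
  set e := Equiv.sigmaFiberEquiv (fun x : Fin n → ℕ => ∑ i, x i) with hedef
  have hs' : HasSum (h ∘ e) (∑' x, h x) := (Equiv.hasSum_iff e).mpr hs.hasSum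
  apply hs'.sigma
  intro k
  have hvanish : ∀ x ∉ Finset.Nat.antidiagonalTuple n k,
      Set.indicator {x : Fin n → ℕ | ∑ i, x i = k} h x = 0 := by
    intro x hx
    rw [Finset.Nat.mem_antidiagonalTuple] at hx
    exact Set.indicator_of_notMem (show x ∉ {x : Fin n → ℕ | ∑ i, x i = k} from hx) h
  have hinner : HasSum (Set.indicator {x : Fin n → ℕ | ∑ i, x i = k} h)
      (∑ x ∈ Finset.Nat.antidiagonalTuple n k,
        Set.indicator {x : Fin n → ℕ | ∑ i, x i = k} h x) :=
    hasSum_sum_of_ne_finset_zero hvanish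
  have heq : ∑ x ∈ Finset.Nat.antidiagonalTuple n k,
      Set.indicator {x : Fin n → ℕ | ∑ i, x i = k} h x
      = ∑ x ∈ Finset.Nat.antidiagonalTuple n k, h x := by
    apply Finset.sum_congr rfl
    intro x hx
    rw [Finset.Nat.mem_antidiagonalTuple] at hx
    exact Set.indicator_of_mem (show x ∈ {x : Fin n → ℕ | ∑ i, x i = k} from hx) h
  rw [heq] at hinner
  rw [← hasSum_subtype_iff_indicator] at hinner
  exact hinner


lemma condVec_expectation {n : ℕ} (ν : Fin n → ℕ → ℝ) (E : ℕ → Prop) (f : (Fin n → ℕ) → ℝ) :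
    ∑' x, f x * condVec ν E x
      = (∑' x : Fin n → ℕ, if E (∑ i, x i) then f x * ∏ i, ν i (x i) else 0)
          / (∑' y : Fin n → ℕ, if E (∑ i, y i) then ∏ i, ν i (y i) else 0) := by
  rw [← tsum_div_const]
  apply tsum_congr
  intro x
  rw [condVec]
  by_cases h : E (∑ i, x i)
  · rw [if_pos h, if_pos h]
    ring
  · rw [if_neg h, if_neg h]
    simp

lemma tsum_ite_fiber {n : ℕ} (t : (Fin n → ℕ) → ℝ) (P : ℕ → Prop) (inst : ∀ k, Decidable (P k))
    (N : ℕ) (hP : ∀ k, P k → k ≤ N) :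
    (∑' x : Fin n → ℕ, @ite ℝ (P (∑ i, x i)) (inst _) (t x) 0)
      = ∑ k ∈ range (N+1), @ite ℝ (P k) (inst k)
          (∑ x ∈ Finset.Nat.antidiagonalTuple n k, t x) 0 := by
  have hzero : ∀ x ∉ (range (N+1)).biUnion (fun k => Finset.Nat.antidiagonalTuple n k),
      (@ite ℝ (P (∑ i, x i)) (inst _) (t x) 0) = 0 := by
    intro x hx
    rw [if_neg]
    intro hPx
    apply hx
    apply Finset.mem_biUnion.mpr
    exact ⟨∑ i, x i, Finset.mem_range.mpr (Nat.lt_succ_of_le (hP _ hPx)),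
      Finset.Nat.mem_antidiagonalTuple.mpr rfl⟩
  have hdisj : Set.PairwiseDisjoint ↑(range (N+1))
      (fun k => Finset.Nat.antidiagonalTuple n k) := by
    intro k1 _ k2 _ hne
    simp only [Function.onFun]
    rw [Finset.disjoint_left]
    intro x hx1 hx2
    rw [Finset.Nat.mem_antidiagonalTuple] at hx1 hx2
    exact hne (by rw [← hx1, ← hx2])
  rw [tsum_eq_sum hzero, Finset.sum_biUnion hdisj]
  apply Finset.sum_congr rfl
  intro k hk
  by_cases hPk : P k
  · rw [if_pos hPk]
    apply Finset.sum_congr rfl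
    intro x hx
    rw [Finset.Nat.mem_antidiagonalTuple] at hx
    exact if_pos (by rw [hx]; exact hPk)
  · rw [if_neg hPk]
    apply Finset.sum_eq_zero
    intro x hx
    rw [Finset.Nat.mem_antidiagonalTuple] at hx
    exact if_neg (by rw [hx]; exact hPk)

lemma summable_ite_fiber {n : ℕ} (t : (Fin n → ℕ) → ℝ) (P : ℕ → Prop) (inst : ∀ k, Decidable (P k))
    (N : ℕ) (hP : ∀ k, P k → k ≤ N) :
    Summable (fun x : Fin n → ℕ => @ite ℝ (P (∑ i, x i)) (inst _) (t x) 0) := by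
  apply summable_of_ne_finset_zero
    (s := (range (N+1)).biUnion (fun k => Finset.Nat.antidiagonalTuple n k))
  intro x hx
  rw [if_neg]
  intro hPx
  apply hx
  apply Finset.mem_biUnion.mpr
  exact ⟨∑ i, x i, Finset.mem_range.mpr (Nat.lt_succ_of_le (hP _ hPx)),
    Finset.Nat.mem_antidiagonalTuple.mpr rfl⟩


/-- The canonical measure is sandwiched between the tail conditionings: for
independent `X₁,…,Xₙ` with log-concave laws and `R` with
`P(Sₙ ≤ R) > 0`, `P(Sₙ = ⌊R⌋) > 0`, `P(Sₙ > R) > 0`, one has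
`P(𝐗ₙ ∈ · | Sₙ ≤ R) ≼ P(𝐗ₙ ∈ · | Sₙ = ⌊R⌋) ≼ P(𝐗ₙ ∈ · | Sₙ > R)`. -/
theorem canonical_sandwich {n : ℕ} (ν : Fin n → ℕ → ℝ)
    (hlc : ∀ i, LogConcavePMF (ν i)) (hν1 : ∀ i, HasSum (ν i) 1)
    (R : ℝ)
    (hle : 0 < ∑' y : Fin n → ℕ,
      if ((∑ i, y i : ℕ) : ℝ) ≤ R then ∏ i, ν i (y i) else 0)
    (heq : 0 < ∑' y : Fin n → ℕ,
      if (∑ i, y i) = Nat.floor R then ∏ i, ν i (y i) else 0)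
    (hgt : 0 < ∑' y : Fin n → ℕ,
      if R < ((∑ i, y i : ℕ) : ℝ) then ∏ i, ν i (y i) else 0) :
    StochDom (condVec ν (fun k => (k : ℝ) ≤ R))
        (condVec ν (fun k => k = Nat.floor R)) ∧
      StochDom (condVec ν (fun k => k = Nat.floor R))
        (condVec ν (fun k => R < (k : ℝ))) := by
  classical
  obtain ⟨hW0, hWdown, hWLC, hGbd, hE⟩ := efron_master n ν hlc
  have hp0 : ∀ x : Fin n → ℕ, 0 ≤ ∏ i, ν i (x i) :=
    fun x => Finset.prod_nonneg fun i _ => (hlc i).1 _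
  have hpsum : HasSum (fun x : Fin n → ℕ => ∏ i, ν i (x i)) 1 :=
    hasSum_prod_pi n ν (fun i x => (hlc i).1 x) hν1
  have hR0 : 0 ≤ R := by
    by_contra hneg
    push_neg at hneg
    have hz : ∀ y : Fin n → ℕ, (if ((∑ i, y i : ℕ):ℝ) ≤ R then ∏ i, ν i (y i) else 0) = 0 :=
      fun y => if_neg (by push_neg; exact lt_of_lt_of_le hneg (Nat.cast_nonneg _))
    rw [tsum_congr hz, tsum_zero] at hle
    exact lt_irrefl 0 hle
  set m : ℕ := Nat.floor R with hmdef
  have hPle : ∀ k : ℕ, ((k:ℝ) ≤ R) → k ≤ m := fun k h => Nat.le_floor h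
  have hPle' : ∀ k : ℕ, k ≤ m → ((k:ℝ) ≤ R) := fun k h =>
    le_trans (Nat.cast_le.mpr h) (Nat.floor_le hR0)
  have hPeq : ∀ k : ℕ, (k = m) → k ≤ m := fun k h => le_of_eq h
  have hPgt : ∀ k : ℕ, (R < (k:ℝ)) → k ≤ k := fun k _ => le_rfl
  have hfibW : ∀ k, (∑ x ∈ Finset.Nat.antidiagonalTuple n k, ∏ i, ν i (x i)) = Wfin n ν k := by
    intro k
    rw [Wfin, Gfin]
    exact Finset.sum_congr rfl (fun x _ => (one_mul _).symm)
  -- positivity facts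
  rw [tsum_ite_fiber (fun x => ∏ i, ν i (x i)) (fun k => ((k:ℝ) ≤ R))
    (fun k => inferInstance) m hPle] at hle
  have hle2 : 0 < ∑ k ∈ range (m+1), Wfin n ν k := by
    refine lt_of_lt_of_le hle (le_of_eq ?_)
    apply Finset.sum_congr rfl
    intro k hk
    rw [if_pos (hPle' k (by simp only [Finset.mem_range] at hk; omega)), hfibW]
  rw [tsum_ite_fiber (fun x => ∏ i, ν i (x i)) (fun k => (k = m))
    (fun k => inferInstance) m hPeq] at heq
  have hWm : 0 < Wfin n ν m := by
    refine lt_of_lt_of_le heq (le_of_eq ?_)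
    rw [Finset.sum_eq_single_of_mem m (Finset.self_mem_range_succ m)]
    · rw [if_pos rfl, hfibW]
    · intro k _ hkne
      rw [if_neg hkne]
  have hWsum : HasSum (fun k => Wfin n ν k) 1 := by
    have h1 := fiber_hasSum (fun x => ∏ i, ν i (x i)) hpsum.summable
    rw [hpsum.tsum_eq] at h1
    have e : (fun k => ∑ x ∈ Finset.Nat.antidiagonalTuple n k, ∏ i, ν i (x i))
        = fun k => Wfin n ν k := funext hfibW
    rwa [e] at h1
  -- generic facts about a bounded monotone f
  have numG : ∀ (f : (Fin n → ℕ) → ℝ) (C : ℝ), (∀ x, |f x| ≤ C) →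
      Summable (fun x : Fin n → ℕ => f x * ∏ i, ν i (x i)) := by
    intro f C hC
    have habs : Summable (fun x : Fin n → ℕ => ‖f x * ∏ i, ν i (x i)‖) := by
      refine Summable.of_nonneg_of_le (fun x => norm_nonneg _) (fun x => ?_)
        (hpsum.summable.mul_left C)
      rw [Real.norm_eq_abs, abs_mul, abs_of_nonneg (hp0 x)]
      exact mul_le_mul_of_nonneg_right (hC x) (hp0 x)
    exact habs.of_norm
  constructor
  · -- first domination
    intro f hmono hbdd
    obtain ⟨C, hC⟩ := hbdd
    rw [condVec_expectation, condVec_expectation]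
    rw [tsum_ite_fiber (fun x => f x * ∏ i, ν i (x i)) (fun k => ((k:ℝ) ≤ R))
      (fun k => Classical.propDecidable _) m hPle]
    rw [tsum_ite_fiber (fun x => ∏ i, ν i (x i)) (fun k => ((k:ℝ) ≤ R))
      (fun k => Classical.propDecidable _) m hPle]
    rw [tsum_ite_fiber (fun x => f x * ∏ i, ν i (x i)) (fun k => (k = m))
      (fun k => Classical.propDecidable _) m hPeq]
    rw [tsum_ite_fiber (fun x => ∏ i, ν i (x i)) (fun k => (k = m))
      (fun k => Classical.propDecidable _) m hPeq]
    have eNle : ∑ k ∈ range (m+1), (@ite ℝ ((k:ℝ) ≤ R) (Classical.propDecidable _)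
        (∑ x ∈ Finset.Nat.antidiagonalTuple n k, f x * ∏ i, ν i (x i)) 0)
        = ∑ k ∈ range (m+1), Gfin n ν f k := by
      apply Finset.sum_congr rfl
      intro k hk
      rw [if_pos (hPle' k (by simp only [Finset.mem_range] at hk; omega))]
      rfl
    have eZle : ∑ k ∈ range (m+1), (@ite ℝ ((k:ℝ) ≤ R) (Classical.propDecidable _)
        (∑ x ∈ Finset.Nat.antidiagonalTuple n k, ∏ i, ν i (x i)) 0)
        = ∑ k ∈ range (m+1), Wfin n ν k := by
      apply Finset.sum_congr rfl
      intro k hk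
      rw [if_pos (hPle' k (by simp only [Finset.mem_range] at hk; omega)), hfibW]
    have eNeq : ∑ k ∈ range (m+1), (@ite ℝ (k = m) (Classical.propDecidable _)
        (∑ x ∈ Finset.Nat.antidiagonalTuple n k, f x * ∏ i, ν i (x i)) 0)
        = Gfin n ν f m := by
      rw [Finset.sum_eq_single_of_mem m (Finset.self_mem_range_succ m)]
      · rw [if_pos rfl]; rfl
      · intro k _ hkne
        rw [if_neg hkne]
    have eZeq : ∑ k ∈ range (m+1), (@ite ℝ (k = m) (Classical.propDecidable _)
        (∑ x ∈ Finset.Nat.antidiagonalTuple n k, ∏ i, ν i (x i)) 0)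
        = Wfin n ν m := by
      rw [Finset.sum_eq_single_of_mem m (Finset.self_mem_range_succ m)]
      · rw [if_pos rfl, hfibW]
      · intro k _ hkne
        rw [if_neg hkne]
    rw [eNle, eZle, eNeq, eZeq]
    rw [div_le_div_iff₀ hle2 hWm]
    rw [Finset.sum_mul, Finset.mul_sum]
    apply Finset.sum_le_sum
    intro k hk
    simp only [Finset.mem_range] at hk
    exact hE f C hC hmono k m (by omega)
  · -- second domination
    intro f hmono hbdd
    obtain ⟨C, hC⟩ := hbdd
    rw [condVec_expectation, condVec_expectation]
    rw [tsum_ite_fiber (fun x => f x * ∏ i, ν i (x i)) (fun k => (k = m))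
      (fun k => Classical.propDecidable _) m hPeq]
    rw [tsum_ite_fiber (fun x => ∏ i, ν i (x i)) (fun k => (k = m))
      (fun k => Classical.propDecidable _) m hPeq]
    have eNeq : ∑ k ∈ range (m+1), (@ite ℝ (k = m) (Classical.propDecidable _)
        (∑ x ∈ Finset.Nat.antidiagonalTuple n k, f x * ∏ i, ν i (x i)) 0)
        = Gfin n ν f m := by
      rw [Finset.sum_eq_single_of_mem m (Finset.self_mem_range_succ m)]
      · rw [if_pos rfl]; rfl
      · intro k _ hkne
        rw [if_neg hkne]
    have eZeq : ∑ k ∈ range (m+1), (@ite ℝ (k = m) (Classical.propDecidable _)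
        (∑ x ∈ Finset.Nat.antidiagonalTuple n k, ∏ i, ν i (x i)) 0)
        = Wfin n ν m := by
      rw [Finset.sum_eq_single_of_mem m (Finset.self_mem_range_succ m)]
      · rw [if_pos rfl, hfibW]
      · intro k _ hkne
        rw [if_neg hkne]
    rw [eNeq, eZeq]
    -- rewrite the > R parts via complement
    have hcompl : ∀ (t : (Fin n → ℕ) → ℝ) (x : Fin n → ℕ),
        (@ite ℝ (R < ((∑ i, x i : ℕ):ℝ)) (Classical.propDecidable _) (t x) 0)
          = t x - (@ite ℝ (((∑ i, x i : ℕ):ℝ) ≤ R) (Classical.propDecidable _) (t x) 0) := by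
      intro t x
      by_cases h : ((∑ i, x i : ℕ):ℝ) ≤ R
      · rw [if_neg (not_lt.mpr h), if_pos h]; ring
      · rw [if_pos (not_le.mp h), if_neg h]; ring
    have tail_eq : ∀ (t : (Fin n → ℕ) → ℝ), Summable t →
        (∑' x : Fin n → ℕ, @ite ℝ (R < ((∑ i, x i : ℕ):ℝ)) (Classical.propDecidable _) (t x) 0)
          = ∑' k : ℕ, (∑ x ∈ Finset.Nat.antidiagonalTuple n (k+(m+1)), t x) := by
      intro t hts
      have e1 : (∑' x : Fin n → ℕ, @ite ℝ (R < ((∑ i, x i : ℕ):ℝ)) (Classical.propDecidable _) (t x) 0)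
          = (∑' x : Fin n → ℕ, t x)
            - (∑' x : Fin n → ℕ, @ite ℝ (((∑ i, x i : ℕ):ℝ) ≤ R) (Classical.propDecidable _) (t x) 0) := by
        rw [tsum_congr (hcompl t)]
        exact Summable.tsum_sub hts (summable_ite_fiber t (fun k => ((k:ℝ) ≤ R)) _ m hPle)
      rw [e1]
      have hfib := fiber_hasSum t hts
      have e2 := (Summable.sum_add_tsum_nat_add (f := fun k =>
        ∑ x ∈ Finset.Nat.antidiagonalTuple n k, t x) (m+1) hfib.summable).symm
      rw [tsum_ite_fiber t (fun k => ((k:ℝ) ≤ R)) (fun k => Classical.propDecidable _) m hPle]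
      have e3 : ∑ k ∈ range (m+1), (@ite ℝ ((k:ℝ) ≤ R) (Classical.propDecidable _)
          (∑ x ∈ Finset.Nat.antidiagonalTuple n k, t x) 0)
          = ∑ k ∈ range (m+1), ∑ x ∈ Finset.Nat.antidiagonalTuple n k, t x := by
        apply Finset.sum_congr rfl
        intro k hk
        rw [if_pos (hPle' k (by simp only [Finset.mem_range] at hk; omega))]
      rw [e3, ← hfib.tsum_eq, e2]
      ring
    have hsummW : Summable (fun k => Wfin n ν (k+(m+1))) := by
      have := (summable_nat_add_iff (m+1)).mpr hWsum.summable
      exact this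
    have hGf : HasSum (fun k => Gfin n ν f k)
        (∑' x : Fin n → ℕ, f x * ∏ i, ν i (x i)) := by
      have h1 := fiber_hasSum (fun x => f x * ∏ i, ν i (x i)) (numG f C hC)
      exact h1
    have hsummG : Summable (fun k => Gfin n ν f (k+(m+1))) :=
      (summable_nat_add_iff (m+1)).mpr hGf.summable
    rw [tail_eq (fun x => f x * ∏ i, ν i (x i)) (numG f C hC)]
    rw [tail_eq (fun x => ∏ i, ν i (x i)) hpsum.summable]
    have eWt : (∑' k : ℕ, (∑ x ∈ Finset.Nat.antidiagonalTuple n (k+(m+1)),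
        ∏ i, ν i (x i))) = ∑' k : ℕ, Wfin n ν (k+(m+1)) :=
      tsum_congr (fun k => hfibW _)
    have eGt : (∑' k : ℕ, (∑ x ∈ Finset.Nat.antidiagonalTuple n (k+(m+1)),
        f x * ∏ i, ν i (x i))) = ∑' k : ℕ, Gfin n ν f (k+(m+1)) :=
      tsum_congr (fun k => rfl)
    rw [eWt, eGt]
    -- positivity of the tail denominator
    have hZgt : 0 < ∑' k : ℕ, Wfin n ν (k+(m+1)) := by
      have hgt2 : 0 < ∑' y : Fin n → ℕ,
          @ite ℝ (R < ((∑ i, y i : ℕ):ℝ)) (Classical.propDecidable _) (∏ i, ν i (y i)) 0 :=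
        lt_of_lt_of_eq hgt (tsum_congr fun y => if_congr Iff.rfl rfl rfl)
      rw [tail_eq (fun x => ∏ i, ν i (x i)) hpsum.summable] at hgt2
      rwa [eWt] at hgt2
    rw [div_le_div_iff₀ hWm hZgt]
    -- cross inequality via tails
    calc Gfin n ν f m * ∑' k : ℕ, Wfin n ν (k+(m+1))
        = ∑' k : ℕ, Gfin n ν f m * Wfin n ν (k+(m+1)) := (tsum_mul_left).symm
      _ ≤ ∑' k : ℕ, Gfin n ν f (k+(m+1)) * Wfin n ν m := by
          apply Summable.tsum_le_tsum
          · intro k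
            exact hE f C hC hmono m (k+(m+1)) (by omega)
          · exact hsummW.mul_left _
          · exact hsummG.mul_right _
      _ = (∑' k : ℕ, Gfin n ν f (k+(m+1))) * Wfin n ν m := by
          rw [← tsum_mul_right]
end
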